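/- Let D be a Dedekind domain and D(X) the localization of D[X] at polynomials with unit content. For every nonzero proper ideal 𝔟 of D, distinct powers X^j and X^k (j ≠ k) lie in distinct residue classes modulo 𝔟·D(X); in particular D(X)/𝔟·D(X) is infinite. -/

import Mathlib

/-- The content ideal of a polynomial: the ideal generated by its coefficients. -/
noncomputable def contentIdeal {D : Type*} [CommRing D] (f : Polynomial D) : Ideal D :=
  Ideal.span (Set.range f.coeff)

open Polynomial in
theorem contentIdeal_X_pow_sub {D : Type*} [CommRing D] [Nontrivial D] {j k : ℕ} (h : j ≠ k) :
    _root_.contentIdeal ((X : D[X]) ^ j - X ^ k) = ⊤ := by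
  rw [_root_.contentIdeal, Ideal.eq_top_iff_one]
  apply Ideal.subset_span
  refine ⟨j, ?_⟩
  simp [coeff_X_pow, h, Ne.symm h]

open Polynomial in
/-- In `D(X)`, the localization of `D[X]` at polynomials with unit content, for every
nonzero proper ideal `𝔟` of `D` the powers `X^j` (`j ≥ 0`) lie in pairwise distinct
residue classes modulo the extended ideal `𝔟·D(X)`; in particular `D(X)/𝔟·D(X)` is
infinite. -/
theorem powers_X_distinct_mod_extension {D : Type*} [CommRing D] [IsDomain D]
    [IsDedekindDomain D] (𝔟 : Ideal D) (hne : 𝔟 ≠ ⊥) (hproper : 𝔟 ≠ ⊤) :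
    (∀ j k : ℕ, j ≠ k →
        algebraMap (Polynomial D)
              (Localization (Submonoid.closure {g : Polynomial D | _root_.contentIdeal g = ⊤}))
              (Polynomial.X ^ j) -
            algebraMap (Polynomial D)
              (Localization (Submonoid.closure {g : Polynomial D | _root_.contentIdeal g = ⊤}))
              (Polynomial.X ^ k) ∉
          Ideal.map
            ((algebraMap (Polynomial D)
                  (Localization
                    (Submonoid.closure {g : Polynomial D | _root_.contentIdeal g = ⊤}))).comp
              (Polynomial.C))
            𝔟) ∧
      Infinite
        ((Localization (Submonoid.closure {g : Polynomial D | _root_.contentIdeal g = ⊤})) ⧸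
          Ideal.map
            ((algebraMap (Polynomial D)
                  (Localization
                    (Submonoid.closure {g : Polynomial D | _root_.contentIdeal g = ⊤}))).comp
              (Polynomial.C))
            𝔟) := by
  set S : Submonoid (Polynomial D) :=
    Submonoid.closure {g : Polynomial D | _root_.contentIdeal g = ⊤} with hS
  set L := Localization S with hL
  set I : Ideal L := Ideal.map ((algebraMap (Polynomial D) L).comp Polynomial.C) 𝔟 with hI
  -- The extended ideal is proper.
  obtain ⟨𝔪, h𝔪max, h𝔟𝔪⟩ := Ideal.exists_le_maximal 𝔟 hproper
  have hprime : (Ideal.map (Polynomial.C (R := D)) 𝔪).IsPrime :=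
    by haveI := h𝔪max.isPrime; exact Ideal.isPrime_map_C_of_isPrime
  have hdisj : Disjoint (S : Set (Polynomial D)) ↑(Ideal.map (Polynomial.C (R := D)) 𝔪) := by
    rw [Set.disjoint_left]
    intro g hg
    induction hg using Submonoid.closure_induction with
    | mem g hg =>
      intro hmem
      rw [SetLike.mem_coe, Ideal.mem_map_C_iff] at hmem
      have : _root_.contentIdeal g ≤ 𝔪 := by
        rw [_root_.contentIdeal, Ideal.span_le]
        rintro _ ⟨n, rfl⟩; exact hmem n
      rw [hg] at this
      exact h𝔪max.ne_top (top_le_iff.mp this)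
    | one =>
      intro hmem
      rw [SetLike.mem_coe, Ideal.mem_map_C_iff] at hmem
      have := hmem 0
      simp only [coeff_one, if_pos rfl] at this
      exact h𝔪max.ne_top ((Ideal.eq_top_iff_one _).mpr this)
    | mul a b _ _ ha hb =>
      intro hmem
      rcases hprime.mem_or_mem hmem with h | h
      · exact ha h
      · exact hb h
  have hmprime : (Ideal.map (algebraMap (Polynomial D) L)
      (Ideal.map (Polynomial.C (R := D)) 𝔪)).IsPrime :=
    IsLocalization.isPrime_of_isPrime_disjoint S L _ hprime hdisj
  have hIproper : I ≠ ⊤ := by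
    intro htop
    apply hmprime.ne_top
    rw [Ideal.eq_top_iff_one]
    have : I ≤ Ideal.map (algebraMap (Polynomial D) L)
        (Ideal.map (Polynomial.C (R := D)) 𝔪) := by
      rw [hI, ← Ideal.map_map]
      exact Ideal.map_mono (Ideal.map_mono h𝔟𝔪)
    exact this (htop ▸ Submodule.mem_top)
  have key : ∀ j k : ℕ, j ≠ k →
      algebraMap (Polynomial D) L (X ^ j) - algebraMap (Polynomial D) L (X ^ k) ∉ I := by
    intro j k hjk hmem
    have hSel : (X : D[X]) ^ j - X ^ k ∈ S :=
      Submonoid.subset_closure (contentIdeal_X_pow_sub hjk)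
    have hunit := IsLocalization.map_units L (⟨_, hSel⟩ : S)
    rw [← map_sub] at hmem
    exact hIproper (Ideal.eq_top_of_isUnit_mem _ hmem hunit)
  refine ⟨key, ?_⟩
  have hinj : Function.Injective (fun n : ℕ =>
      Ideal.Quotient.mk I (algebraMap (Polynomial D) L (X ^ n))) := by
    intro j k hjk
    by_contra hne'
    exact key j k hne' (Ideal.Quotient.eq.mp hjk)
  exact Infinite.of_injective _ hinj
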